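/- Every digraph core is pointed with respect to itself: if D is a digraph such that every acyclic homomorphism from D to itself is an automorphism, then there do not exist two acyclic homomorphisms ρ, φ : D → D that disagree at exactly one vertex of D. -/
import Mathlib


/-- An acyclic homomorphism from the digraph `(α, rD)` to the digraph `(β, rC)`:
arcs are mapped to arcs or collapsed, and every fiber induces an acyclic subdigraph
(no directed closed walk within a fiber). -/
def AcyHom {α β : Type*} (rD : α → α → Prop) (rC : β → β → Prop) (ρ : α → β) : Prop :=
  (∀ u v, rD u v → ρ u = ρ v ∨ rC (ρ u) (ρ v)) ∧
  ∀ x : β, ¬ ∃ y, Relation.TransGen (fun u v => ρ u = x ∧ ρ v = x ∧ rD u v) y y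

/-- An automorphism of the digraph `(α, r)`: a bijective acyclic self-homomorphism
whose inverse is also an acyclic homomorphism. -/
def IsDigraphAut {α : Type*} (r : α → α → Prop) (g : α → α) : Prop :=
  ∃ e : α ≃ α, ⇑e = g ∧ AcyHom r r ⇑e ∧ AcyHom r r ⇑e.symm

/-- Every digraph core is pointed with respect to itself: if every acyclic
homomorphism of a (finite, loopless) digraph `D` to itself is an automorphism,
then no two acyclic homomorphisms `D → D` disagree at exactly one vertex. -/
theorem core_is_self_pointed {V : Type*} [Fintype V] (r : V → V → Prop)
    (hloopless : Irreflexive r)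
    (hcore : ∀ ρ : V → V, AcyHom r r ρ → IsDigraphAut r ρ) :
    ¬ ∃ ρ φ : V → V, AcyHom r r ρ ∧ AcyHom r r φ ∧ (∃! v : V, ρ v ≠ φ v) := by
  rintro ⟨ρ, φ, hρ, hφ, v, hv, huniq⟩
  obtain ⟨e, he, -, -⟩ := hcore ρ hρ
  obtain ⟨f, hf, -, -⟩ := hcore φ hφ
  -- let w be the ρ-preimage of φ v
  set w := e.symm (φ v) with hw
  have hρw : ρ w = φ v := by rw [← he]; simp [hw]
  have hwv : w ≠ v := by
    intro h
    rw [h] at hρw; exact hv hρw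
  have hagree : ρ w = φ w := by
    by_contra h
    exact hwv (huniq w h)
  have : φ w = φ v := by rw [← hagree, hρw]
  have hinj : Function.Injective φ := by rw [← hf]; exact f.injective
  exact hwv (hinj this)
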